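/- Let n ≥ 2, let u ∈ ℝⁿ be unit timelike, and let R be a symmetric real n×n matrix. Then θ_uᵀ R θ_u = −R (R is purely magnetic with respect to u) if and only if there exists c ∈ ℝⁿ with cᵀu = 0 such that R = (ηu)cᵀ + c(ηu)ᵀ. In this case cᵀηc ≥ 0 and the characteristic polynomial of the operator ηR equals X^{n−2}·(X² + cᵀηc); in particular, ηR has the eigenvalue 0 with multiplicity n − 2 and the purely imaginary eigenvalues ±i√(cᵀηc), and the trace of ηR (hence the Ricci scalar) vanishes. -/

import Mathlib

open Matrix

noncomputable section

/-- The Minkowski metric `η = diag(-1, 1, …, 1)` on `ℝⁿ`. -/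
def eta (n : ℕ) : Matrix (Fin n) (Fin n) ℝ :=
  Matrix.diagonal fun i => if i.val = 0 then (-1 : ℝ) else 1

/-- The reflection `θ_u = I + 2u(ηu)ᵀ` sending `u ↦ -u` and fixing `u^⊥`. -/
def theta {n : ℕ} (u : Fin n → ℝ) : Matrix (Fin n) (Fin n) ℝ :=
  1 + (2 : ℝ) • vecMulVec u ((eta n).mulVec u)

namespace Stmt15Aux
variable {n : ℕ}

lemma vmv_transpose (a b : Fin n → ℝ) : (vecMulVec a b)ᵀ = vecMulVec b a := by
  ext i j; simp [vecMulVec_apply, mul_comm]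

lemma mul_vmv (M : Matrix (Fin n) (Fin n) ℝ) (a b : Fin n → ℝ) :
    M * vecMulVec a b = vecMulVec (M.mulVec a) b := by
  ext i j
  simp only [mul_apply, vecMulVec_apply, mulVec, dotProduct, Finset.sum_mul]
  exact Finset.sum_congr rfl fun k _ => by ring

lemma vmv_mul (M : Matrix (Fin n) (Fin n) ℝ) (a b : Fin n → ℝ) :
    vecMulVec a b * M = vecMulVec a (Mᵀ.mulVec b) := by
  ext i j
  simp only [mul_apply, vecMulVec_apply, mulVec, dotProduct, Finset.mul_sum, transpose_apply]
  exact Finset.sum_congr rfl fun k _ => by ring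

lemma vmv_mul_vmv (a b c d : Fin n → ℝ) :
    vecMulVec a b * vecMulVec c d = (b ⬝ᵥ c) • vecMulVec a d := by
  ext i j
  simp only [mul_apply, vecMulVec_apply, Matrix.smul_apply, dotProduct, Finset.sum_mul, smul_eq_mul,
    Finset.mul_sum]
  exact Finset.sum_congr rfl fun k _ => by ring

lemma vmv_mulVec (a b x : Fin n → ℝ) : (vecMulVec a b).mulVec x = (b ⬝ᵥ x) • a := by
  ext i
  simp only [mulVec, dotProduct, vecMulVec_apply, Pi.smul_apply, smul_eq_mul, Finset.sum_mul]
  exact Finset.sum_congr rfl fun k _ => by ring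

lemma vmv_neg_left (a b : Fin n → ℝ) : vecMulVec (-a) b = -vecMulVec a b := by
  ext i j; simp [vecMulVec_apply]

lemma vmv_neg_right (a b : Fin n → ℝ) : vecMulVec a (-b) = -vecMulVec a b := by
  ext i j; simp [vecMulVec_apply]

lemma trace_vmv (a b : Fin n → ℝ) : (vecMulVec a b).trace = a ⬝ᵥ b := by
  simp [Matrix.trace, Matrix.diag, vecMulVec_apply, dotProduct]

lemma eta_mulVec_mulVec (x : Fin n → ℝ) : (eta n).mulVec ((eta n).mulVec x) = x := by
  ext i
  simp only [eta, mulVec_diagonal]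
  split_ifs <;> ring

lemma eta_dot (x y : Fin n → ℝ) : (eta n).mulVec x ⬝ᵥ (eta n).mulVec y = x ⬝ᵥ y := by
  simp only [dotProduct, eta, mulVec_diagonal]
  exact Finset.sum_congr rfl fun i _ => by split_ifs <;> ring

lemma dot_split [NeZero n] (x y : Fin n → ℝ) :
    x ⬝ᵥ y = x 0 * y 0 + ∑ i ∈ Finset.univ.erase (0 : Fin n), x i * y i := by
  rw [dotProduct, ← Finset.sum_erase_add _ _ (Finset.mem_univ (0 : Fin n)), add_comm]

lemma dot_eta_split [NeZero n] (x y : Fin n → ℝ) :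
    x ⬝ᵥ (eta n).mulVec y =
      -(x 0 * y 0) + ∑ i ∈ Finset.univ.erase (0 : Fin n), x i * y i := by
  rw [dotProduct, ← Finset.sum_erase_add _ _ (Finset.mem_univ (0 : Fin n)), add_comm]
  congr 1
  · simp [eta, mulVec_diagonal]
  · refine Finset.sum_congr rfl fun i hi => ?_
    have h0 : i ≠ 0 := Finset.ne_of_mem_erase hi
    have : (i : ℕ) ≠ 0 := fun hv => h0 (Fin.ext (by simpa using hv))
    simp [eta, mulVec_diagonal, this, h0]

lemma sum_map_dot {K : Type*} [Field K] (ψ : ℝ →+* K) (t : K) (f g : Fin n → ℝ) :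
    ∑ k, t * ψ (f k) * ψ (g k) = t * ψ (f ⬝ᵥ g) := by
  rw [dotProduct, map_sum, Finset.mul_sum]
  exact Finset.sum_congr rfl fun k _ => by rw [_root_.map_mul]; ring

open Polynomial in
set_option maxHeartbeats 1000000 in
lemma charpoly_rank2 (hn : 2 ≤ n) (u c v w : Fin n → ℝ)
    (h1 : c ⬝ᵥ u = 0) (h2 : v ⬝ᵥ u = -1) (h3 : v ⬝ᵥ w = 0) :
    (vecMulVec u c + vecMulVec w v).charpoly
      = X ^ (n - 2) * (X ^ 2 + C (c ⬝ᵥ w)) := by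
  set S : Matrix (Fin n) (Fin n) ℝ := vecMulVec u c + vecMulVec w v with hS
  set K := FractionRing (Polynomial ℝ)
  set φ : Polynomial ℝ →+* K := algebraMap (Polynomial ℝ) K with hφdef
  have hφ : Function.Injective φ := IsFractionRing.injective (Polynomial ℝ) K
  set ψ : ℝ →+* K := φ.comp Polynomial.C with hψdef
  set x : K := φ X with hxdef
  have hx : x ≠ 0 := by
    intro h
    exact Polynomial.X_ne_zero (hφ (by simpa using h))
  have hinv : x * x⁻¹ = 1 := mul_inv_cancel₀ hx
  apply hφ
  have hLHS : φ S.charpoly = ((charmatrix S).map φ).det := by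
    rw [Matrix.charpoly, RingHom.map_det, RingHom.mapMatrix_apply]
  have hchar : (charmatrix S).map φ = x • (1 : Matrix (Fin n) (Fin n) K) - S.map ψ := by
    ext i j
    by_cases h : i = j
    · subst h
      simp [charmatrix_apply_eq, Matrix.map_apply, map_sub, hψdef, hxdef]
    · simp [charmatrix_apply_ne _ _ _ h, Matrix.map_apply, Matrix.one_apply_ne h, map_neg,
        hψdef]
  set A : Matrix (Fin n) (Fin 2) K := Matrix.of fun i j => if j = 0 then ψ (u i) else ψ (w i)
    with hA
  set B : Matrix (Fin 2) (Fin n) K :=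
      Matrix.of fun j k => -x⁻¹ * (if j = 0 then ψ (c k) else ψ (v k)) with hB
  have key : x • (1 : Matrix (Fin n) (Fin n) K) - S.map ψ = x • (1 + A * B) := by
    ext i k
    by_cases h : i = k
    · subst h
      simp only [Matrix.smul_apply, Matrix.sub_apply, Matrix.add_apply, Matrix.map_apply,
        Matrix.one_apply_eq, mul_apply, Fin.sum_univ_two, hA, hB, Matrix.of_apply, hS,
        vecMulVec_apply, _root_.map_add, _root_.map_mul, smul_eq_mul]
      norm_num
      linear_combination (ψ (u i) * ψ (c i) + ψ (w i) * ψ (v i)) * hinv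
    · simp only [Matrix.smul_apply, Matrix.sub_apply, Matrix.add_apply, Matrix.map_apply,
        Matrix.one_apply_ne h, mul_apply, Fin.sum_univ_two, hA, hB, Matrix.of_apply, hS,
        vecMulVec_apply, _root_.map_add, _root_.map_mul, smul_eq_mul]
      norm_num
      linear_combination (ψ (u i) * ψ (c k) + ψ (w i) * ψ (v k)) * hinv
  have e00 : (B * A) 0 0 = 0 := by
    simp only [mul_apply, hA, hB, Matrix.of_apply]
    norm_num
    rw [sum_map_dot ψ (-x⁻¹) c u, h1, map_zero, mul_zero]
  have e01 : (B * A) 0 1 = -x⁻¹ * ψ (c ⬝ᵥ w) := by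
    simp only [mul_apply, hA, hB, Matrix.of_apply]
    norm_num
    rw [sum_map_dot ψ (-x⁻¹) c w]
  have e10 : (B * A) 1 0 = x⁻¹ := by
    simp only [mul_apply, hA, hB, Matrix.of_apply]
    norm_num
    rw [sum_map_dot ψ (-x⁻¹) v u, h2]
    simp
    ring
  have e11 : (B * A) 1 1 = 0 := by
    simp only [mul_apply, hA, hB, Matrix.of_apply]
    norm_num
    rw [sum_map_dot ψ (-x⁻¹) v w, h3, map_zero, mul_zero]
  have hdet2 : (1 + B * A).det = 1 + ψ (c ⬝ᵥ w) * (x⁻¹ * x⁻¹) := by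
    rw [Matrix.det_fin_two]
    simp only [Matrix.add_apply, Matrix.one_apply_eq,
      Matrix.one_apply_ne (by decide : (0 : Fin 2) ≠ 1),
      Matrix.one_apply_ne (by decide : (1 : Fin 2) ≠ 0), e00, e01, e10, e11]
    ring
  have hxn : x ^ n = x ^ (n - 2) * x ^ 2 := by
    rw [← pow_add]
    congr 1
    omega
  calc φ S.charpoly = ((charmatrix S).map φ).det := hLHS
    _ = (x • (1 + A * B)).det := by rw [hchar, key]
    _ = x ^ n * (1 + A * B).det := by
        rw [Matrix.det_smul, Fintype.card_fin]
    _ = x ^ n * (1 + B * A).det := by rw [Matrix.det_one_add_mul_comm]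
    _ = x ^ n * (1 + ψ (c ⬝ᵥ w) * (x⁻¹ * x⁻¹)) := by rw [hdet2]
    _ = x ^ (n - 2) * (x ^ 2 + ψ (c ⬝ᵥ w)) := by
        rw [hxn]
        linear_combination (x ^ (n - 2) * ψ (c ⬝ᵥ w) * (x * x⁻¹ + 1)) * hinv
    _ = φ (X ^ (n - 2) * (X ^ 2 + C (c ⬝ᵥ w))) := by
        simp [_root_.map_mul, map_pow, _root_.map_add, hψdef, hxdef]

end Stmt15Aux

open Stmt15Aux in
/-- A symmetric (Ricci-like) matrix `R` is purely magnetic with respect to a unit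
timelike `u` iff `R = (ηu)cᵀ + c(ηu)ᵀ` for some covector `c` with `cᵀu = 0`; in this
case `cᵀηc ≥ 0`, the characteristic polynomial of the Ricci operator `ηR` is
`X^(n-2)·(X² + cᵀηc)` (so `ηR` has eigenvalue `0` with multiplicity `n-2` and the
purely imaginary eigenvalues `±i√(cᵀηc)`), and the trace of `ηR` vanishes. -/
theorem stmt15 {n : ℕ} (hn : 2 ≤ n) (u : Fin n → ℝ)
    (hu : u ⬝ᵥ (eta n).mulVec u = -1)
    (R : Matrix (Fin n) (Fin n) ℝ) (hR : Rᵀ = R) :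
    ((theta u)ᵀ * R * theta u = -R ↔
      ∃ c : Fin n → ℝ, c ⬝ᵥ u = 0 ∧
        R = vecMulVec ((eta n).mulVec u) c + vecMulVec c ((eta n).mulVec u)) ∧
    (∀ c : Fin n → ℝ, c ⬝ᵥ u = 0 →
      R = vecMulVec ((eta n).mulVec u) c + vecMulVec c ((eta n).mulVec u) →
      0 ≤ c ⬝ᵥ (eta n).mulVec c ∧
      (eta n * R).charpoly = Polynomial.X ^ (n - 2) *
        (Polynomial.X ^ 2 + Polynomial.C (c ⬝ᵥ (eta n).mulVec c)) ∧
      Matrix.trace (eta n * R) = 0) := by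
  haveI : NeZero n := ⟨by omega⟩
  set v : Fin n → ℝ := (eta n).mulVec u with hvdef
  have huv : u ⬝ᵥ v = -1 := hu
  have hvu : v ⬝ᵥ u = -1 := by rw [dotProduct_comm]; exact hu
  have tt : (theta u)ᵀ = 1 + (2 : ℝ) • vecMulVec v u := by
    simp [theta, transpose_add, transpose_smul, vmv_transpose, hvdef]
  constructor
  · constructor
    · -- forward
      intro h
      set a : Fin n → ℝ := R.mulVec u with hadef
      have e1 : (theta u)ᵀ * R = R + (2 : ℝ) • vecMulVec v a := by
        rw [tt, add_mul, one_mul, smul_mul_assoc, vmv_mul, hR]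
      have e2 : (theta u)ᵀ * R * theta u =
          R + (2 : ℝ) • vecMulVec a v + (2 : ℝ) • vecMulVec v a
            + ((2 : ℝ) * ((2 : ℝ) * (a ⬝ᵥ u))) • vecMulVec v v := by
        rw [e1, theta, mul_add, mul_one, add_mul, mul_smul_comm, mul_vmv, smul_mul_assoc,
          mul_smul_comm, vmv_mul_vmv, smul_smul, ← hadef, ← hvdef]
        module
      rw [e2] at h
      -- extract the scalar u ⬝ᵥ R u = 0
      have hb : a ⬝ᵥ u = 0 := by
        have hscal := congrArg (fun M => u ⬝ᵥ M.mulVec u) h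
        simp only [Matrix.add_mulVec, Matrix.neg_mulVec, smul_mulVec, vmv_mulVec,
          dotProduct_add, dotProduct_smul, dotProduct_neg, smul_eq_mul, hvu, huv,
          dotProduct_comm u a, ← hadef] at hscal
        nlinarith [hscal]
      rw [hb] at h
      norm_num at h
      have h3 : R + vecMulVec a v + vecMulVec v a = 0 := by
        have h2 : (2 : ℝ) • (R + vecMulVec a v + vecMulVec v a) = 0 := by
          calc (2 : ℝ) • (R + vecMulVec a v + vecMulVec v a)
              = (R + (2 : ℝ) • vecMulVec a v + (2 : ℝ) • vecMulVec v a) + R := by module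
            _ = -R + R := by rw [h]
            _ = 0 := neg_add_cancel R
        have := smul_eq_zero.mp h2
        rcases this with h' | h'
        · norm_num at h'
        · exact h'
      refine ⟨-a, ?_, ?_⟩
      · rw [neg_dotProduct, hb, neg_zero]
      · rw [vmv_neg_left, vmv_neg_right]
        have h4 : R = -(vecMulVec a v + vecMulVec v a) :=
          eq_neg_of_add_eq_zero_left (by rw [← add_assoc]; exact h3)
        rw [h4]
        abel
    · -- reverse
      rintro ⟨c, hc, rfl⟩
      have huc : u ⬝ᵥ c = 0 := by rw [dotProduct_comm]; exact hc
      rw [tt, theta]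
      simp only [mul_add, add_mul, one_mul, mul_one, smul_mul_assoc, mul_smul_comm,
        vmv_mul_vmv, smul_smul, ← hvdef, hc, huc, huv, hvu, zero_smul, smul_zero,
        add_zero, zero_add]
      module
  · -- part 2
    intro c hc hRe
    have huc : u ⬝ᵥ c = 0 := by rw [dotProduct_comm]; exact hc
    set w : Fin n → ℝ := (eta n).mulVec c with hwdef
    have hvw : v ⬝ᵥ w = 0 := by rw [hvdef, hwdef, eta_dot]; exact huc
    have hveq : (eta n).mulVec v = u := by
      show (eta n).mulVec ((eta n).mulVec u) = u
      exact eta_mulVec_mulVec u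
    have hSform : eta n * R = vecMulVec u c + vecMulVec w v := by
      rw [hRe, mul_add, mul_vmv, mul_vmv, hveq]
    refine ⟨?_, ?_, ?_⟩
    · -- nonnegativity
      set E := Finset.univ.erase (0 : Fin n) with hE
      have hsplit_s : c ⬝ᵥ (eta n).mulVec c = -(c 0 * c 0) + ∑ i ∈ E, c i * c i :=
        dot_eta_split c c
      have hsplit_u : -(u 0 * u 0) + ∑ i ∈ E, u i * u i = -1 := by
        rw [← dot_eta_split u u]; exact hu
      have hsplit_c : c 0 * u 0 + ∑ i ∈ E, c i * u i = 0 := by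
        rw [← dot_split c u]; exact hc
      have hCS : (∑ i ∈ E, c i * u i) ^ 2 ≤
          (∑ i ∈ E, c i * c i) * (∑ i ∈ E, u i * u i) := by
        have := Finset.sum_mul_sq_le_sq_mul_sq E c u
        calc (∑ i ∈ E, c i * u i) ^ 2 ≤ (∑ i ∈ E, c i ^ 2) * ∑ i ∈ E, u i ^ 2 := this
          _ = (∑ i ∈ E, c i * c i) * (∑ i ∈ E, u i * u i) := by
              simp only [pow_two]
      have hB : (0 : ℝ) ≤ ∑ i ∈ E, u i * u i :=
        Finset.sum_nonneg fun i _ => mul_self_nonneg _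
      have hCc : (0 : ℝ) ≤ ∑ i ∈ E, c i * c i :=
        Finset.sum_nonneg fun i _ => mul_self_nonneg _
      rw [hsplit_s]
      have hAval : ∑ i ∈ E, c i * u i = -(c 0 * u 0) := by linarith
      have key : (c 0 * u 0) * (c 0 * u 0) ≤
          (∑ i ∈ E, c i * c i) * ∑ i ∈ E, u i * u i := by
        calc (c 0 * u 0) * (c 0 * u 0) = (∑ i ∈ E, c i * u i) ^ 2 := by rw [hAval]; ring
          _ ≤ _ := hCS
      nlinarith [key, hB, hCc, hsplit_u]
    · rw [hSform]
      exact charpoly_rank2 hn u c v w hc hvu hvw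
    · rw [hSform, trace_add, trace_vmv, trace_vmv, huc, dotProduct_comm w v, hvw]
      norm_num

end
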